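/- Let T be a firm non-expansive mapping of a metric space (X,δ) into itself with linear rate of escape ρ(T) = 0. Then there exists a metric functional h on X such that h(Tx) ≤ h(x) for every x ∈ X. -/
import Mathlib


open Filter Topology

def IsWeakMetric {X : Type*} (δ : X → X → ℝ) : Prop :=
  (∀ x, δ x x = 0) ∧ (∀ x y, 0 ≤ δ x y) ∧ (∀ x y z, δ x z ≤ δ x y + δ y z)

def IsNonexpansive {X : Type*} (δ : X → X → ℝ) (T : X → X) : Prop :=
  ∀ x y, δ (T x) (T y) ≤ δ x y

def IsFirm {X : Type*} (δ : X → X → ℝ) (T : X → X) : Prop :=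
  ∃ q r s t : X → X → ℝ,
    (∀ x y, 0 ≤ q x y) ∧ (∀ x y, 0 ≤ r x y) ∧ (∀ x y, 0 ≤ s x y) ∧ (∀ x y, 0 ≤ t x y) ∧
    (∃ α > 0, ∀ x y, α ≤ t x y) ∧
    (∀ x y, q x y + r x y + s x y + 2 * t x y ≤ 1) ∧
    (∀ x y, δ (T x) (T y) ≤ q x y * δ x y + r x y * δ x (T x) + s x y * δ y (T y)
      + t x y * (δ x (T y) + δ (T x) y))

set_option maxHeartbeats 1000000 in
theorem stmt18 {X : Type*} [MetricSpace X] (x₀ : X) (T : X → X)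
    (hT : IsNonexpansive (fun x y : X => dist x y) T)
    (hF : IsFirm (fun x y : X => dist x y) T)
    (hρ : Tendsto (fun n : ℕ => dist x₀ (T^[n] x₀) / n) atTop (nhds 0)) :
    ∃ h : X → ℝ,
      h ∈ closure {f : X → ℝ | ∃ w : X, f = fun x => dist x w - dist x₀ w} ∧
      ∀ x : X, h (T x) ≤ h x := by
  classical
  obtain ⟨q, r, s, t, hq, hr, hs, ht, ⟨α, hα, hαt⟩, hsum, hfirm⟩ := hF
  simp only at hT hfirm
  set u : ℕ → X := fun n => T^[n] x₀ with hu_def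
  have hu : ∀ n, u (n + 1) = T (u n) := fun n => Function.iterate_succ_apply' T n x₀
  have hu0 : u 0 = x₀ := rfl
  set D : ℕ → ℕ → ℝ := fun n k => dist (u n) (u (n + k)) with hD_def
  have hD0 : ∀ n, D n 0 = 0 := by intro n; simp [hD_def]
  have hDnonneg : ∀ n k, 0 ≤ D n k := fun n k => dist_nonneg
  have hDanti : ∀ n k, D (n + 1) k ≤ D n k := by
    intro n k
    have h1 : u (n + 1 + k) = T (u (n + k)) := by
      rw [show n + 1 + k = (n + k) + 1 by ring, hu]
    simp only [hD_def, h1, hu]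
    exact hT (u n) (u (n + k))
  have hDanti' : ∀ k, Antitone fun n => D n k := fun k =>
    antitone_nat_of_succ_le fun n => hDanti n k
  set b : ℕ → ℝ := fun k => ⨅ n, D n k with hb_def
  have hbdd : ∀ k, BddBelow (Set.range fun n => D n k) := by
    intro k; exact ⟨0, by rintro x ⟨n, rfl⟩; exact hDnonneg n k⟩
  have hble : ∀ k n, b k ≤ D n k := fun k n => ciInf_le (hbdd k) n
  have hbnonneg : ∀ k, 0 ≤ b k := fun k => le_ciInf fun n => hDnonneg n k
  have hb0 : b 0 = 0 := le_antisymm (le_trans (hble 0 0) (le_of_eq (hD0 0))) (hbnonneg 0)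
  have happrox : ∀ k, ∀ ε > (0:ℝ), ∃ n, D n k < b k + ε := by
    intro k ε hε
    exact exists_lt_of_ciInf_lt (by linarith [hbnonneg k] : b k < b k + ε)
  -- convexity
  have hconv : ∀ k, b 1 ≤ b (k + 1) → 2 * b (k + 1) ≤ b k + b (k + 2) := by
    intro k hk1
    have key : ∀ ε > (0:ℝ), -ε ≤ α * (b k + b (k + 2) - 2 * b (k + 1)) := by
      intro ε hε
      obtain ⟨n1, h1⟩ := happrox (k + 1) ε hε
      obtain ⟨n2, h2⟩ := happrox 1 ε hε
      obtain ⟨n3, h3⟩ := happrox (k + 2) ε hε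
      obtain ⟨n4, h4⟩ := happrox k ε hε
      set N := max (max n1 n2) (max n3 n4) with hN
      have hN1 : n1 ≤ N := le_trans (le_max_left _ _) (le_max_left _ _)
      have hN2 : n2 ≤ N := le_trans (le_max_right _ _) (le_max_left _ _)
      have hN3 : n3 ≤ N := le_trans (le_max_left _ _) (le_max_right _ _)
      have hN4 : n4 ≤ N := le_trans (le_max_right _ _) (le_max_right _ _)
      have e1 : D N (k + 1) < b (k + 1) + ε := lt_of_le_of_lt (hDanti' (k + 1) hN1) h1
      have e2 : D N 1 < b 1 + ε := lt_of_le_of_lt (hDanti' 1 hN2) h2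
      have e2' : D (N + (k + 1)) 1 < b 1 + ε :=
        lt_of_le_of_lt (hDanti' 1 (le_trans hN2 (Nat.le_add_right _ _))) h2
      have e3 : D N (k + 2) < b (k + 2) + ε := lt_of_le_of_lt (hDanti' (k + 2) hN3) h3
      have e4 : D N k < b k + ε := lt_of_le_of_lt (hDanti' k hN4) h4
      have hfm := hfirm (u N) (u (N + (k + 1)))
      rw [show T (u N) = u (N + 1) from (hu N).symm,
          show T (u (N + (k + 1))) = u (N + (k + 1) + 1) from (hu _).symm] at hfm
      set Q := q (u N) (u (N + (k + 1))) with hQ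
      set R := r (u N) (u (N + (k + 1))) with hR
      set S := s (u N) (u (N + (k + 1))) with hS
      set Tt := t (u N) (u (N + (k + 1))) with hTt
      have hQ0 : 0 ≤ Q := hq _ _
      have hR0 : 0 ≤ R := hr _ _
      have hS0 : 0 ≤ S := hs _ _
      have hTt0 : α ≤ Tt := hαt _ _
      have hsum' : Q + R + S + 2 * Tt ≤ 1 := hsum _ _
      -- identify the distances
      have d1 : dist (u (N + 1)) (u (N + (k + 1) + 1)) = D (N + 1) (k + 1) := by
        simp only [hD_def]; ring_nf
      have d2 : dist (u N) (u (N + (k + 1))) = D N (k + 1) := rfl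
      have d3 : dist (u N) (u (N + 1)) = D N 1 := rfl
      have d4 : dist (u (N + (k + 1))) (u (N + (k + 1) + 1)) = D (N + (k + 1)) 1 := rfl
      have d5 : dist (u N) (u (N + (k + 1) + 1)) = D N (k + 2) := by
        simp only [hD_def]; ring_nf
      have d6 : dist (u (N + 1)) (u (N + (k + 1))) = D (N + 1) k := by
        simp only [hD_def]; ring_nf
      rw [d1, d2, d3, d4, d5, d6] at hfm
      have lb : b (k + 1) ≤ D (N + 1) (k + 1) := hble _ _
      have ub6 : D (N + 1) k ≤ D N k := hDanti N k
      -- combine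
      have hTt0' : 0 ≤ Tt := le_trans (le_of_lt hα) hTt0
      have main : b (k + 1) ≤ Q * (b (k + 1) + ε) + R * (b 1 + ε) + S * (b 1 + ε)
          + Tt * ((b (k + 2) + ε) + (b k + ε)) := by
        refine le_trans lb (le_trans hfm ?_)
        exact add_le_add (add_le_add (add_le_add
          (mul_le_mul_of_nonneg_left e1.le hQ0)
          (mul_le_mul_of_nonneg_left e2.le hR0))
          (mul_le_mul_of_nonneg_left e2'.le hS0))
          (mul_le_mul_of_nonneg_left (add_le_add e3.le (le_trans ub6 e4.le)) hTt0')
      have hint1 : 0 ≤ R * (b (k + 1) - b 1) := mul_nonneg hR0 (sub_nonneg.2 hk1)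
      have hint2 : 0 ≤ S * (b (k + 1) - b 1) := mul_nonneg hS0 (sub_nonneg.2 hk1)
      have hint3 : 0 ≤ (1 - Q - R - S - 2 * Tt) * (b (k + 1)) :=
        mul_nonneg (by linarith) (hbnonneg (k + 1))
      have hint4 : 0 ≤ (1 - Q - R - S - 2 * Tt) * ε := mul_nonneg (by linarith) hε.le
      rcases le_or_gt (2 * b (k + 1) - b k - b (k + 2)) 0 with hcase | hcase
      · have : 0 ≤ α * (b k + b (k + 2) - 2 * b (k + 1)) :=
          mul_nonneg hα.le (by linarith)
        linarith
      · have hTtM : α * (2 * b (k + 1) - b k - b (k + 2))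
            ≤ Tt * (2 * b (k + 1) - b k - b (k + 2)) :=
          mul_le_mul_of_nonneg_right hTt0 hcase.le
        linarith [main, hint1, hint2, hint3, hint4, hTtM]
    by_contra hM
    push_neg at hM
    have hMneg : α * (b k + b (k + 2) - 2 * b (k + 1)) < 0 :=
      mul_neg_of_pos_of_neg hα (by linarith)
    have := key (-(α * (b k + b (k + 2) - 2 * b (k + 1))) / 2) (by linarith)
    linarith
  -- linear growth
  have hlin : ∀ k : ℕ, (k : ℝ) * b 1 ≤ b k ∧ b 1 ≤ b (k + 1) - b k := by
    intro k
    induction k with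
    | zero => simp [hb0]
    | succ k ih =>
      have hb1k : b 1 ≤ b (k + 1) := by
        have hk0 : (0:ℝ) ≤ (k : ℝ) * b 1 := mul_nonneg (Nat.cast_nonneg k) (hbnonneg 1)
        linarith [ih.1, ih.2]
      have hc := hconv k hb1k
      constructor
      · push_cast
        nlinarith [ih.1, ih.2]
      · linarith [ih.2]
  have hb1 : b 1 = 0 := by
    have hle : ∀ k : ℕ, 1 ≤ k → b 1 ≤ dist x₀ (T^[k] x₀) / k := by
      intro k hk
      have hkpos : (0:ℝ) < (k : ℝ) := by exact_mod_cast hk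
      have h1 : (k : ℝ) * b 1 ≤ dist x₀ (T^[k] x₀) := by
        have h2 : b k ≤ D 0 k := hble k 0
        have h3 : D 0 k = dist x₀ (T^[k] x₀) := by
          simp only [hD_def, hu_def, Nat.zero_add, Function.iterate_zero_apply]
        linarith [(hlin k).1]
      rw [le_div_iff₀ hkpos]
      linarith
    have hle0 : b 1 ≤ 0 :=
      ge_of_tendsto hρ (eventually_atTop.2 ⟨1, fun k hk => hle k hk⟩)
    exact le_antisymm hle0 (hbnonneg 1)
  -- Step 2: compactness argument
  set Kc := closure {f : X → ℝ | ∃ w : X, f = fun x => dist x w - dist x₀ w} with hKc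
  have hKcompact : IsCompact Kc := by
    have hsub : Kc ⊆ Set.pi Set.univ fun x => Set.Icc (-(dist x x₀)) (dist x x₀) := by
      apply closure_minimal
      · rintro f ⟨w, rfl⟩ x _
        have habs : |dist x w - dist x₀ w| ≤ dist x x₀ := abs_dist_sub_le x x₀ w
        rw [abs_le] at habs
        exact ⟨habs.1, habs.2⟩
      · exact isClosed_set_pi fun x _ => isClosed_Icc
    exact (isCompact_univ_pi fun x => isCompact_Icc).of_isClosed_subset isClosed_closure hsub
  set F : ℕ → Set (X → ℝ) := fun n => Kc ∩ {h | ∀ x, h (T x) ≤ h x + D n 1} with hF_def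
  have hFc : ∀ n, IsClosed (F n) := by
    intro n
    apply IsClosed.inter isClosed_closure
    have heq : {h : X → ℝ | ∀ x, h (T x) ≤ h x + D n 1}
        = ⋂ x : X, {h : X → ℝ | h (T x) ≤ h x + D n 1} := by
      ext f; simp [Set.mem_iInter]
    rw [heq]
    exact isClosed_iInter fun x =>
      isClosed_le (continuous_apply (T x)) ((continuous_apply x).add continuous_const)
  have hFne : ∀ n, (F n).Nonempty := by
    intro n
    refine ⟨fun x => dist x (u (n + 1)) - dist x₀ (u (n + 1)),
      subset_closure ⟨u (n + 1), rfl⟩, ?_⟩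
    intro x
    have h1 : dist (T x) (u (n + 1)) ≤ dist x (u n) := by
      rw [hu]; exact hT x (u n)
    have h2 : dist x (u n) ≤ dist x (u (n + 1)) + dist (u (n + 1)) (u n) :=
      dist_triangle _ _ _
    have h3 : dist (u (n + 1)) (u n) = D n 1 := dist_comm _ _
    simp only [Set.mem_setOf_eq]
    linarith
  have hFmono : ∀ n, F (n + 1) ⊆ F n := by
    intro n f hf
    exact ⟨hf.1, fun x => le_trans (hf.2 x) (by linarith [hDanti n 1])⟩
  have hF0 : IsCompact (F 0) :=
    hKcompact.of_isClosed_subset (hFc 0) Set.inter_subset_left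
  obtain ⟨h, hh⟩ :=
    IsCompact.nonempty_iInter_of_sequence_nonempty_isCompact_isClosed F hFmono hFne hF0 hFc
  simp only [Set.mem_iInter] at hh
  refine ⟨h, (hh 0).1, fun x => ?_⟩
  have hfin : h (T x) - h x ≤ ⨅ n, D n 1 :=
    le_ciInf fun n => by linarith [(hh n).2 x]
  have : (⨅ n, D n 1) = b 1 := rfl
  linarith [hb1 ▸ (this ▸ hfin)]
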